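/- Let y > 0 and τ = 1/2 + y·i. Then the absolutely convergent lattice sum Σ over odd m and all n ∈ ℤ of (−1)ⁿ·(m/2 + n)² / |mτ + n|⁶ equals 0. -/

import Mathlib

/-- For `τ = 1/2 + y·i` with `y > 0`, the lattice sum
`Σ_{m odd, n ∈ ℤ} (−1)ⁿ·(m/2+n)²/|mτ+n|⁶` vanishes. -/
theorem lattice_sum_odd_halfshift_sq (y : ℝ) (hy : 0 < y) :
    (∑' p : ℤ × ℤ,
      if Odd p.1 then
        ((-1 : ℝ) ^ p.2 * ((p.1 : ℝ) / 2 + (p.2 : ℝ)) ^ 2)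
          / ‖(p.1 : ℂ) * ((1 / 2 : ℂ) + (y : ℂ) * Complex.I) + (p.2 : ℂ)‖ ^ 6
      else 0) = 0 := by
  set τ : ℂ := (1 / 2 : ℂ) + (y : ℂ) * Complex.I with hτ
  set f : ℤ × ℤ → ℝ := fun p =>
    if Odd p.1 then
      ((-1 : ℝ) ^ p.2 * ((p.1 : ℝ) / 2 + (p.2 : ℝ)) ^ 2)
        / ‖(p.1 : ℂ) * τ + (p.2 : ℂ)‖ ^ 6
    else 0 with hf
  have hinv : Function.Involutive (fun p : ℤ × ℤ => (p.1, -p.2 - p.1)) := by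
    intro p; simp
  let e : ℤ × ℤ ≃ ℤ × ℤ :=
    ⟨fun p => (p.1, -p.2 - p.1), fun p => (p.1, -p.2 - p.1), hinv, hinv⟩
  have key : ∀ p : ℤ × ℤ, f (e p) = - f p := by
    rintro ⟨m, n⟩
    show f (m, -n - m) = - f (m, n)
    by_cases hm : Odd m
    · simp only [hf, if_pos hm]
      have hsign : (-1 : ℝ) ^ (-n - m) = -(-1 : ℝ) ^ n := by
        rcases Int.even_or_odd n with hn | hn
        · have h1 : Odd (-n - m) := by
            rcases hm with ⟨a, ha⟩; rcases hn with ⟨b, hb⟩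
            exact ⟨-b - a - 1, by omega⟩
          rw [h1.neg_one_zpow, hn.neg_one_zpow]
        · have h1 : Even (-n - m) := by
            rcases hm with ⟨a, ha⟩; rcases hn with ⟨b, hb⟩
            exact ⟨-b - a - 1, by omega⟩
          rw [h1.neg_one_zpow, hn.neg_one_zpow]; norm_num
      have habs : ‖(m : ℂ) * τ + ((-n - m : ℤ) : ℂ)‖
          = ‖(m : ℂ) * τ + (n : ℂ)‖ := by
        have hz : (m : ℂ) * τ + ((-n - m : ℤ) : ℂ)
            = -(starRingEnd ℂ) ((m : ℂ) * τ + (n : ℂ)) := by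
          push_cast
          simp only [hτ, map_add, map_mul, Complex.conj_I]
          rw [Complex.ext_iff]
          constructor <;> simp <;> ring
        rw [hz, norm_neg, Complex.norm_conj]
      rw [habs, hsign]
      push_cast
      ring
    · simp [hf, if_neg hm]
  have h1 : ∑' p, f p = ∑' p, f (e p) := (e.tsum_eq f).symm
  have h2 : ∑' p, f (e p) = - ∑' p, f p := by
    simp_rw [key]
    exact tsum_neg
  have : ∑' p, f p = 0 := by linarith [h1.trans h2]
  exact this
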